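/- Let Q be a positive integer and let N, t be positive natural numbers with 2t dividing N. In the quotient ring R = (ZMod Q)[X]/(X^N + 1), let x denote the image of X. Then (x^{N/t + 1})^N = −1; consequently X ↦ X^{N/t+1} induces a ring endomorphism φ of R fixing the constants, with φ(x) = x^{N/t+1}. Moreover, for every natural number j, φ(x^{2tj}) = x^{2tj} and φ(x^{t + 2tj}) = −x^{t+2tj}; that is, φ fixes all monomials whose exponent is an even multiple of t and negates all monomials whose exponent is an odd multiple of t. -/

import Mathlib

open Polynomial

/-- In `R = (ZMod Q)[X]/(X^N + 1)` with `x` the image of `X` and `2t ∣ N`, we have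
`(x^{N/t+1})^N = −1`; consequently there is a ring endomorphism `φ` of `R` fixing the
constants (an `ZMod Q`-algebra endomorphism) with `φ(x) = x^{N/t+1}`, and `φ` fixes all
monomials `x^{2tj}` and negates all monomials `x^{t+2tj}`. -/
theorem evalAuto_negacyclic (Q : ℕ) (hQ : 0 < Q) (N t : ℕ)
    (hN : 0 < N) (ht : 0 < t) (hdvd : 2 * t ∣ N) :
    let I : Ideal (Polynomial (ZMod Q)) := Ideal.span {X ^ N + 1}
    let x : Polynomial (ZMod Q) ⧸ I := Ideal.Quotient.mk I X
    (x ^ (N / t + 1)) ^ N = -1 ∧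
    ∃ φ : (Polynomial (ZMod Q) ⧸ I) →ₐ[ZMod Q] (Polynomial (ZMod Q) ⧸ I),
      φ x = x ^ (N / t + 1) ∧
      ∀ j : ℕ,
        φ (x ^ (2 * t * j)) = x ^ (2 * t * j) ∧
        φ (x ^ (t + 2 * t * j)) = -(x ^ (t + 2 * t * j)) := by
  intro I x
  obtain ⟨m, hm⟩ := hdvd
  have hNt : N / t = 2 * m := by
    subst hm
    rw [mul_assoc, mul_comm t m, ← mul_assoc, Nat.mul_div_cancel _ ht]
  -- x^N = -1
  have hxN : x ^ N = -1 := by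
    have h0 : (Ideal.Quotient.mk I) (X ^ N + 1) = 0 :=
      Ideal.Quotient.eq_zero_iff_mem.mpr (Ideal.subset_span rfl)
    rw [map_add, map_pow, map_one] at h0
    linear_combination h0
  have hxpow : (x ^ (N / t + 1)) ^ N = -1 := by
    rw [← pow_mul, mul_comm, pow_mul, hxN, hNt]
    rw [pow_succ, pow_mul]
    norm_num
  refine ⟨hxpow, ?_⟩
  -- the lift
  have hker : ∀ a ∈ I, (aeval (x ^ (N / t + 1)) : Polynomial (ZMod Q) →ₐ[ZMod Q] _) a = 0 := by
    intro a ha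
    rw [show I = Ideal.span {X ^ N + 1} from rfl, Ideal.mem_span_singleton] at ha
    obtain ⟨c, rfl⟩ := ha
    rw [map_mul]
    have : (aeval (x ^ (N / t + 1)) : Polynomial (ZMod Q) →ₐ[ZMod Q] _) (X ^ N + 1) = 0 := by
      rw [map_add, map_pow, aeval_X, map_one, hxpow]; ring
    rw [this, zero_mul]
  refine ⟨Ideal.Quotient.liftₐ I (aeval (x ^ (N / t + 1))) hker, ?_, ?_⟩
  · exact aeval_X (x ^ (N / t + 1))
  · intro j
    have h1 : ((-1 : Polynomial (ZMod Q) ⧸ I)) ^ (2 * j) = 1 := by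
      rw [pow_mul]; norm_num
    have hφx : (Ideal.Quotient.liftₐ I (aeval (x ^ (N / t + 1))) hker) x = x ^ (N / t + 1) := by
      exact aeval_X (x ^ (N / t + 1))
    constructor
    · rw [map_pow, hφx, ← pow_mul, hNt]
      have he : (2 * m + 1) * (2 * t * j) = 2 * t * j + N * (2 * j) := by
        subst hm; ring
      rw [he, pow_add, pow_mul x N, hxN, h1, mul_one]
    · rw [map_pow, hφx, ← pow_mul, hNt]
      have he : (2 * m + 1) * (t + 2 * t * j) = N + (t + 2 * t * j) + N * (2 * j) := by
        subst hm; ring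
      rw [he, pow_add, pow_add, pow_mul x N, hxN, h1]
      ring
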